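/- arXiv:2501.04200 — 4 statements merged into one kernel-verified Lean document; each statement's English description precedes it below -/
import Mathlib

section
/- Let Ψ ⊆ Δ_ℓ^+ be a root ideal, M a multiset with support contained in [ℓ], γ ∈ ℤ^ℓ, and β a removable root of Ψ (i.e., Ψ \ {β} is still a root ideal). Then K(Ψ; M; γ) = K(Ψ \ {β}; M; γ) + K(Ψ; M; γ + ε_β), where ε_{(i,j)} := ε_i − ε_j. -/
open scoped BigOperators

noncomputable section

attribute [local instance] Classical.propDecidable

/-- The ring of symmetric functions over `ℚ`, modeled as the polynomial ring
`ℚ[h₁, h₂, …]` with variable `n` corresponding to the complete homogeneous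
symmetric function `h_{n+1}`. -/
abbrev Lambda : Type := MvPolynomial ℕ ℚ

/-- The complete homogeneous symmetric function `h_m` for `m : ℤ`, with the
conventions `h_m = 0` for `m < 0` and `h_0 = 1`. -/
def hh (m : ℤ) : Lambda :=
  if m < 0 then 0 else if m = 0 then 1 else MvPolynomial.X (m.toNat - 1)

/-- Generalized binomial coefficient `C(n, k)` for `n : ℤ`, `k : ℕ`. -/
def zchoose (n : ℤ) (k : ℕ) : ℤ :=
  if 0 ≤ n then n.toNat.choose k else (-1) ^ k * ((k - 1 - n).toNat.choose k)

/-- `k_m^{(r)} = ∑_{i=0}^m C(r+i-1, i) h_{m-i}` (which is `0` for `m < 0`). -/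
def kk (m : ℤ) (r : ℕ) : Lambda :=
  ∑ i ∈ Finset.range (m.toNat + 1), (zchoose ((r : ℤ) + i - 1) i : ℚ) • hh (m - i)

/-- `g_γ = det (k_{γ_i + j - i}^{(i-1)})_{1 ≤ i,j ≤ ℓ}` (here indices are 1-based;
`γ : ℕ → ℤ` is read on `[1, ℓ]`). -/
def gf (ℓ : ℕ) (γ : ℕ → ℤ) : Lambda :=
  Matrix.det (Matrix.of fun i j : Fin ℓ => kk (γ (i.1 + 1) + (j.1 : ℤ) - (i.1 : ℤ)) i.1)

/-- `Δ⁺_ℓ = {(i,j) : 1 ≤ i < j ≤ ℓ}`. -/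
def Delta (ℓ : ℕ) : Finset (ℕ × ℕ) :=
  (Finset.Icc 1 ℓ ×ˢ Finset.Icc 1 ℓ).filter fun p => p.1 < p.2

/-- A root ideal: an upper order ideal of `Δ⁺_ℓ` for the order
`(a,b) ≤ (c,d) ↔ a ≥ c ∧ b ≤ d`. -/
def IsRootIdeal (ℓ : ℕ) (Ψ : Finset (ℕ × ℕ)) : Prop :=
  Ψ ⊆ Delta ℓ ∧ ∀ p ∈ Ψ, ∀ q ∈ Delta ℓ, q.1 ≤ p.1 → p.2 ≤ q.2 → q ∈ Ψ

/-- standard basis vector `ε_z`. -/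
def eps (z : ℕ) : ℕ → ℤ := fun i => if i = z then 1 else 0

/-- `k_γ := k_{γ_1}^{(0)} ⋯ k_{γ_ℓ}^{(ℓ-1)}`. -/
def kprod (ℓ : ℕ) (γ : ℕ → ℤ) : Lambda :=
  ∏ i ∈ Finset.Icc 1 ℓ, kk (γ i) (i - 1)

/-- The net shift of `γ` produced by applying the raising operators `R_{ij}` for
all `(i,j) ∈ T`. -/
def epsR (T : Finset (ℕ × ℕ)) (i : ℕ) : ℤ :=
  ((T.filter fun p => p.1 = i).card : ℤ) - ((T.filter fun p => p.2 = i).card : ℤ)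

/-- The Katalan function
`K(Ψ; M; γ) = ∏_{z ∈ M} (1 - L_z) ∏_{(i,j) ∈ Ψ} (1 - R_{ij})⁻¹ g_γ`,
written via the equivalent finite expansion
`∏_{z ∈ M} (1 - L_z) ∏_{(i,j) ∈ Δ⁺_ℓ \ Ψ} (1 - R_{ij}) k_γ`. -/
def Katalan (ℓ : ℕ) (Ψ : Finset (ℕ × ℕ)) (M : Multiset ℕ) (γ : ℕ → ℤ) : Lambda :=
  (M.powerset.map fun S =>
    ((-1 : ℚ) ^ Multiset.card S) •
      ∑ T ∈ (Delta ℓ \ Ψ).powerset,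
        ((-1 : ℚ) ^ T.card) • kprod ℓ (fun i => γ i - S.count i + epsR T i)).sum

/-- The multiset `M` is supported in `[ℓ]`. -/
def SuppIn (ℓ : ℕ) (M : Multiset ℕ) : Prop := ∀ x ∈ M, 1 ≤ x ∧ x ≤ ℓ

/-- `L(R)`: the multiset of second components of the roots in `R`. -/
def colMultiset (R : Finset (ℕ × ℕ)) : Multiset ℕ := R.val.map Prod.snd

/-- `Δ^k(μ) = {(i,j) ∈ Δ⁺_ℓ : k - μ_i + i < j}`. -/
def Dk (ℓ k : ℕ) (μ : ℕ → ℤ) : Finset (ℕ × ℕ) :=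
  (Delta ℓ).filter fun p => (k : ℤ) - μ p.1 + (p.1 : ℤ) < (p.2 : ℤ)

/-- The (generalized) closed `k`-Schur Katalan function
`g̃_μ^{(k)} = K(Δ^k(μ); Δ^k(μ); μ)`. -/
def cKS (ℓ k : ℕ) (μ : ℕ → ℤ) : Lambda :=
  Katalan ℓ (Dk ℓ k μ) (colMultiset (Dk ℓ k μ)) μ

/-- `L_z g̃_μ^{(k)} = K(Δ^k(μ); Δ^k(μ); μ - ε_z)`. -/
def Lg (ℓ k : ℕ) (μ : ℕ → ℤ) (z : ℕ) : Lambda :=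
  Katalan ℓ (Dk ℓ k μ) (colMultiset (Dk ℓ k μ)) (fun i => μ i - eps z i)

/-- `μ ∈ P̃_ℓ^k`: `μ_i ≤ k` and `μ_1 + ℓ - 1 ≥ μ_2 + ℓ - 2 ≥ ⋯ ≥ μ_ℓ`. -/
def tP (ℓ k : ℕ) (μ : ℕ → ℤ) : Prop :=
  (∀ i, 1 ≤ i → i ≤ ℓ → μ i ≤ k) ∧ ∀ i, 1 ≤ i → i + 1 ≤ ℓ → μ (i + 1) ≤ μ i + 1

/-- `λ ∈ P_ℓ^k`: a `k`-bounded partition of length `ℓ` (weakly decreasing,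
parts in `[0, k]`, vanishing beyond row `ℓ`). -/
def IsPartition (ℓ k : ℕ) (lam : ℕ → ℤ) : Prop :=
  (∀ i, 1 ≤ i → i ≤ ℓ → 0 ≤ lam i ∧ lam i ≤ (k : ℤ)) ∧
  (∀ i, 1 ≤ i → lam (i + 1) ≤ lam i) ∧ (∀ i, ℓ < i → lam i = 0)

/-- `|λ|`, the size. -/
def psize (ℓ : ℕ) (lam : ℕ → ℤ) : ℤ := ∑ i ∈ Finset.Icc 1 ℓ, lam i

/-- A removable root of `Ψ`. -/
def Removable (ℓ : ℕ) (Ψ : Finset (ℕ × ℕ)) (p : ℕ × ℕ) : Prop :=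
  p ∈ Ψ ∧ IsRootIdeal ℓ (Ψ.erase p)

/-- An addable root of `Ψ`. -/
def Addable (ℓ : ℕ) (Ψ : Finset (ℕ × ℕ)) (p : ℕ × ℕ) : Prop :=
  p ∈ Delta ℓ ∧ p ∉ Ψ ∧ IsRootIdeal ℓ (insert p Ψ)

/-- Row `r` of `Ψ`. -/
def rowSet (Ψ : Finset (ℕ × ℕ)) (r : ℕ) : Finset ℕ :=
  (Ψ.filter fun p => p.1 = r).image Prod.snd

/-- Column `c` of `Ψ`. -/
def colSet (Ψ : Finset (ℕ × ℕ)) (c : ℕ) : Finset ℕ :=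
  (Ψ.filter fun p => p.2 = c).image Prod.fst

/-- `Ψ` has a wall in rows `r, r+1`. -/
def HasWall (Ψ : Finset (ℕ × ℕ)) (r : ℕ) : Prop :=
  (rowSet Ψ r).card = (rowSet Ψ (r + 1)).card

/-- `Ψ` has a ceiling in columns `c, c+1`. -/
def HasCeiling (Ψ : Finset (ℕ × ℕ)) (c : ℕ) : Prop :=
  (colSet Ψ c).card = (colSet Ψ (c + 1)).card

/-- `Ψ` has a mirror in rows `r, r+1`. -/
def HasMirror (ℓ : ℕ) (Ψ : Finset (ℕ × ℕ)) (r : ℕ) : Prop :=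
  ∃ c, r + 2 ≤ c ∧ c ≤ ℓ - 1 ∧ Removable ℓ Ψ (r, c) ∧ Removable ℓ Ψ (r + 1, c + 1)

/-- `b` is the bottom row of the root ideal `Ψ` (with `b = 0` if `Ψ = ∅`). -/
def IsBottom (Ψ : Finset (ℕ × ℕ)) (b : ℕ) : Prop :=
  (∀ p ∈ Ψ, p.1 ≤ b) ∧ (b = 0 ∨ ∃ q, (b, q) ∈ Ψ)

/-- `downStep ℓ Ψ x j` means `down_Ψ(x) = j`, i.e. `(x,j)` is a removable root. -/
def downStep (ℓ : ℕ) (Ψ : Finset (ℕ × ℕ)) (x j : ℕ) : Prop := Removable ℓ Ψ (x, j)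

/-- Being in the same bounce path of `Ψ`. -/
def SamePath (ℓ : ℕ) (Ψ : Finset (ℕ × ℕ)) : ℕ → ℕ → Prop :=
  Relation.EqvGen (downStep ℓ Ψ)

/-- `top_Ψ(x)`: the minimum vertex of the bounce path of `Ψ` containing `x`. -/
def topV (ℓ : ℕ) (Ψ : Finset (ℕ × ℕ)) (x : ℕ) : ℕ := sInf {y | SamePath ℓ Ψ y x}

/-- The algebra homomorphism `Λ → Λ[t]`, `f ↦ ∑_d (e_d^⊥ f) t^d`; it is the
unique algebra map sending `h_m ↦ h_m + t h_{m-1}`. -/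
def Eop : Lambda →ₐ[ℚ] Polynomial Lambda :=
  MvPolynomial.aeval fun n =>
    Polynomial.C (MvPolynomial.X n) + Polynomial.X * Polynomial.C (hh (n : ℤ))

/-- `e_d^⊥`, the Hall-adjoint of multiplication by the elementary symmetric
function `e_d`. -/
def eperp (d : ℕ) (f : Lambda) : Lambda := (Eop f).coeff d

/-- `G_{1^m}^⊥ = ∑_{i ≥ 0} (-1)^i C(m-1+i, m-1) e_{m+i}^⊥`, the Hall-adjoint of
multiplication by the stable Grothendieck polynomial `G_{1^m}`. -/
def Gperp (m : ℕ) (f : Lambda) : Lambda :=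
  (Eop f).sum fun d c =>
    (if m ≤ d then
        ((-1 : ℚ)) ^ (d - m) * ((zchoose ((m : ℤ) - 1 + ((d - m : ℕ) : ℤ)) (d - m) : ℤ) : ℚ)
      else 0) • c

lemma epsR_insert (β : ℕ × ℕ) (T : Finset (ℕ × ℕ)) (hβ : β ∉ T) (i : ℕ) :
    epsR (insert β T) i = epsR T i + eps β.1 i - eps β.2 i := by
  have h1 : β ∉ T.filter fun p => p.1 = i := fun h => hβ (Finset.mem_of_mem_filter _ h)
  have h2 : β ∉ T.filter fun p => p.2 = i := fun h => hβ (Finset.mem_of_mem_filter _ h)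
  have c1 : ((((insert β T).filter fun p => p.1 = i).card : ℤ)) =
      ((T.filter fun p => p.1 = i).card : ℤ) + eps β.1 i := by
    rw [Finset.filter_insert]
    unfold eps
    by_cases e : β.1 = i
    · rw [if_pos e, if_pos e.symm, Finset.card_insert_of_notMem h1]; push_cast; ring
    · rw [if_neg e, if_neg fun h => e h.symm]; ring
  have c2 : ((((insert β T).filter fun p => p.2 = i).card : ℤ)) =
      ((T.filter fun p => p.2 = i).card : ℤ) + eps β.2 i := by
    rw [Finset.filter_insert]
    unfold eps
    by_cases e : β.2 = i
    · rw [if_pos e, if_pos e.symm, Finset.card_insert_of_notMem h2]; push_cast; ring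
    · rw [if_neg e, if_neg fun h => e h.symm]; ring
  unfold epsR
  rw [c1, c2]
  ring

lemma inner_sum_split (ℓ : ℕ) (Ψ : Finset (ℕ × ℕ)) (hsub : Ψ ⊆ Delta ℓ)
    (β : ℕ × ℕ) (hβΨ : β ∈ Ψ) (δ : ℕ → ℤ) :
    ∑ T ∈ (Delta ℓ \ Ψ.erase β).powerset,
        ((-1 : ℚ) ^ T.card) • kprod ℓ (fun i => δ i + epsR T i) =
      (∑ T ∈ (Delta ℓ \ Ψ).powerset,
        ((-1 : ℚ) ^ T.card) • kprod ℓ (fun i => δ i + epsR T i)) -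
      ∑ T ∈ (Delta ℓ \ Ψ).powerset,
        ((-1 : ℚ) ^ T.card) •
          kprod ℓ (fun i => (δ i + eps β.1 i - eps β.2 i) + epsR T i) := by
  have hβD : β ∈ Delta ℓ := hsub hβΨ
  have hβnot : β ∉ Delta ℓ \ Ψ := by simp [Finset.mem_sdiff, hβΨ]
  have hset : Delta ℓ \ Ψ.erase β = insert β (Delta ℓ \ Ψ) := by
    ext x
    simp only [Finset.mem_sdiff, Finset.mem_erase, Finset.mem_insert]
    constructor
    · rintro ⟨hx, hx2⟩
      by_cases hxβ : x = β
      · exact Or.inl hxβ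
      · exact Or.inr ⟨hx, fun h => hx2 ⟨hxβ, h⟩⟩
    · rintro (rfl | ⟨hx, hx2⟩)
      · exact ⟨hβD, fun h => h.1 rfl⟩
      · exact ⟨hx, fun h => hx2 h.2⟩
  rw [hset, Finset.powerset_insert, Finset.sum_union, Finset.sum_image]
  · have : ∀ T ∈ (Delta ℓ \ Ψ).powerset,
        ((-1 : ℚ) ^ (insert β T).card) • kprod ℓ (fun i => δ i + epsR (insert β T) i) =
        -(((-1 : ℚ) ^ T.card) •
          kprod ℓ (fun i => (δ i + eps β.1 i - eps β.2 i) + epsR T i)) := by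
      intro T hT
      have hβT : β ∉ T := fun h => hβnot (Finset.mem_powerset.mp hT h)
      have hfun : (fun i => δ i + epsR (insert β T) i) =
          (fun i => δ i + eps β.1 i - eps β.2 i + epsR T i) := by
        funext i; rw [epsR_insert β T hβT]; ring
      rw [hfun, Finset.card_insert_of_notMem hβT, pow_succ, mul_neg_one, neg_smul]
    rw [Finset.sum_congr rfl this, Finset.sum_neg_distrib]
    ring
  · intro x hx y hy hxy
    have hxβ : β ∉ x := fun h => hβnot (Finset.mem_powerset.mp hx h)
    have hyβ : β ∉ y := fun h => hβnot (Finset.mem_powerset.mp hy h)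
    ext a
    constructor
    · intro ha
      have : a ∈ insert β y := hxy ▸ Finset.mem_insert_of_mem ha
      rcases Finset.mem_insert.mp this with rfl | h
      · exact absurd ha hxβ
      · exact h
    · intro ha
      have : a ∈ insert β x := hxy ▸ Finset.mem_insert_of_mem ha
      rcases Finset.mem_insert.mp this with rfl | h
      · exact absurd ha hyβ
      · exact h
  · rw [Finset.disjoint_right]
    intro T hT
    simp only [Finset.mem_image] at hT
    obtain ⟨U, hU, rfl⟩ := hT
    intro h
    exact hβnot (Finset.mem_powerset.mp h (Finset.mem_insert_self β U))

set_option maxHeartbeats 1600000 in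
/-- Removing a removable root:
`K(Ψ; M; γ) = K(Ψ \ β; M; γ) + K(Ψ; M; γ + ε_β)`. -/
theorem katalan_remove_root (ℓ : ℕ) (Ψ : Finset (ℕ × ℕ)) (hΨ : IsRootIdeal ℓ Ψ)
    (M : Multiset ℕ) (hM : SuppIn ℓ M) (γ : ℕ → ℤ) (β : ℕ × ℕ)
    (hβ : Removable ℓ Ψ β) :
    Katalan ℓ Ψ M γ =
      Katalan ℓ (Ψ.erase β) M γ +
        Katalan ℓ Ψ M (fun i => γ i + eps β.1 i - eps β.2 i) := by
  have key : Katalan ℓ (Ψ.erase β) M γ =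
      Katalan ℓ Ψ M γ - Katalan ℓ Ψ M (fun i => γ i + eps β.1 i - eps β.2 i) := by
    unfold Katalan
    rw [← Multiset.sum_map_sub (G := Lambda)]
    congr 1
    apply Multiset.map_congr rfl
    intro S hS
    rw [inner_sum_split ℓ Ψ hΨ.1 β hβ.1 (fun i => (γ i : ℤ) - S.count i), smul_sub]
    congr 2
    apply Finset.sum_congr rfl
    intro T hT
    congr 1
    apply congrArg
    funext i
    beta_reduce
    ring
  rw [key]; ring

end
end

section
/- Let Ψ ⊆ Δ_ℓ^+ be a root ideal, M a multiset supported in [ℓ], γ ∈ ℤ^ℓ, and z ∈ [ℓ]. Suppose (1) Ψ has a ceiling in columns z, z+1 (columns z and z+1 have the same length), (2) Ψ has a wall in rows z, z+1 (rows z and z+1 have the same length), and (3) m_M(z) + 1 = m_M(z+1). Then K(Ψ; M; γ) + K(Ψ; M; s_z γ − ε_z + ε_{z+1}) = 0, where s_z γ swaps entries z and z+1 of γ. -/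
open scoped BigOperators

noncomputable section

attribute [local instance] Classical.propDecidable

section PartA

lemma hh_neg {m : ℤ} (h : m < 0) : hh m = 0 := by simp [hh, h]

lemma zchoose_zero' (n : ℤ) : zchoose n 0 = 1 := by
  unfold zchoose; split_ifs <;> simp

lemma zchoose_natCast (a : ℕ) (k : ℕ) : zchoose (a : ℤ) k = a.choose k := by
  simp [zchoose]

lemma kk_neg {m : ℤ} (h : m < 0) (r : ℕ) : kk m r = 0 := by
  have h0 : m.toNat = 0 := Int.toNat_of_nonpos h.le
  simp [kk, h0, hh_neg h, zchoose_zero']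

lemma kk_succ (m : ℤ) (r : ℕ) : kk m (r + 1) = kk m r + kk (m - 1) (r + 1) := by
  rcases lt_or_ge m 0 with hm | hm
  · rw [kk_neg hm, kk_neg hm, kk_neg (by omega)]; ring
  · have hsub : kk m (r + 1) - kk m r = kk (m - 1) (r + 1) := by
      unfold kk
      rw [← Finset.sum_sub_distrib]
      have hstep : ∀ i ∈ Finset.range (m.toNat + 1),
          (((zchoose (((r+1 : ℕ) : ℤ) + i - 1) i : ℤ) : ℚ) • hh (m - i)
            - ((zchoose ((r : ℤ) + i - 1) i : ℤ) : ℚ) • hh (m - i))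
          = (((zchoose (((r+1 : ℕ) : ℤ) + i - 1) i - zchoose ((r : ℤ) + i - 1) i : ℤ) : ℚ)) • hh (m - i) := by
        intro i _
        rw [← sub_smul]; push_cast; ring_nf
      rw [Finset.sum_congr rfl hstep, Finset.sum_range_succ']
      have h0 : (((zchoose (((r+1 : ℕ) : ℤ) + ((0:ℕ):ℤ) - 1) 0 - zchoose ((r : ℤ) + ((0:ℕ):ℤ) - 1) 0 : ℤ) : ℚ)) • hh (m - ((0:ℕ):ℤ)) = 0 := by
        rw [zchoose_zero', zchoose_zero']; simp
      rw [h0, add_zero]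
      have hterm : ∀ i : ℕ,
          (((zchoose (((r+1 : ℕ) : ℤ) + (((i+1:ℕ)):ℤ) - 1) (i+1) - zchoose ((r : ℤ) + (((i+1:ℕ)):ℤ) - 1) (i+1) : ℤ) : ℚ)) • hh (m - (((i+1:ℕ)):ℤ))
          = ((zchoose (((r+1 : ℕ) : ℤ) + (i:ℤ) - 1) i : ℤ) : ℚ) • hh (m - 1 - (i:ℤ)) := by
        intro i
        have e1 : ((r+1 : ℕ) : ℤ) + (((i+1:ℕ)):ℤ) - 1 = ((r + i + 1 : ℕ) : ℤ) := by push_cast; ring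
        have e2 : (r : ℤ) + (((i+1:ℕ)):ℤ) - 1 = ((r + i : ℕ) : ℤ) := by push_cast; ring
        have e3 : ((r+1 : ℕ) : ℤ) + (i : ℤ) - 1 = ((r + i : ℕ) : ℤ) := by push_cast; ring
        have e4 : m - (((i+1:ℕ)):ℤ) = m - 1 - (i:ℤ) := by push_cast; ring
        rw [e4]
        congr 1
        rw [e1, e2, e3, zchoose_natCast, zchoose_natCast, zchoose_natCast]
        have hp : (r + i + 1).choose (i + 1) = (r+i).choose i + (r+i).choose (i+1) :=
          Nat.choose_succ_succ' (r+i) i ▸ (by rw [Nat.choose_succ_succ (r+i) i])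
        rw [hp]; push_cast; ring
      rw [Finset.sum_congr rfl (fun i _ => hterm i)]
      rcases Nat.eq_zero_or_pos m.toNat with h0' | h0'
      · have hm0 : m = 0 := by omega
        subst hm0
        simp [h0', hh]
      · have hm1 : (m - 1).toNat + 1 = m.toNat := by omega
        rw [← hm1]
    linear_combination hsub

end PartA
section PartB

/-- auxiliary operator: `∏_{a∈M}(1-L_a)` applied to `f`, evaluated at `β`. -/
def OpS (M : Multiset ℕ) (f : (ℕ → ℤ) → Lambda) (β : ℕ → ℤ) : Lambda :=
  (M.powerset.map fun S => ((-1 : ℚ) ^ Multiset.card S) •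
    f (fun i => β i - S.count i)).sum

/-- swap coordinates `z`, `z+1` of `β`. -/
def swf (z : ℕ) (β : ℕ → ℤ) : ℕ → ℤ :=
  fun i => if i = z then β (z+1) else if i = z+1 then β z else β i

lemma msum_neg {α : Type*} (m : Multiset α) (g : α → Lambda) :
    (m.map fun x => -(g x)).sum = -(m.map g).sum := by
  induction m using Multiset.induction with
  | empty => simp
  | cons a s ih => simp [ih]; ring

lemma msum_sub {α : Type*} (m : Multiset α) (g h : α → Lambda) :
    (m.map fun x => g x - h x).sum = (m.map g).sum - (m.map h).sum := by
  induction m using Multiset.induction with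
  | empty => simp
  | cons a s ih => simp [ih]; ring

lemma msum_finsum {α β' : Type*} (m : Multiset α) (P : Finset β') (g : α → β' → Lambda) :
    (m.map fun x => ∑ t ∈ P, g x t).sum = ∑ t ∈ P, (m.map fun x => g x t).sum := by
  induction m using Multiset.induction with
  | empty => simp
  | cons a s ih => simp [ih, Finset.sum_add_distrib]

lemma OpS_zero (f : (ℕ → ℤ) → Lambda) (β : ℕ → ℤ) : OpS 0 f β = f β := by
  simp [OpS]

lemma OpS_cons (a : ℕ) (M : Multiset ℕ) (f : (ℕ → ℤ) → Lambda) (β : ℕ → ℤ) :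
    OpS (a ::ₘ M) f β = OpS M f β - OpS M f (fun i => β i - eps a i) := by
  unfold OpS
  rw [Multiset.powerset_cons, Multiset.map_add, Multiset.sum_add, Multiset.map_map]
  congr 1
  have key : ∀ S : Multiset ℕ,
      ((fun S => ((-1 : ℚ) ^ Multiset.card S) • f (fun i => β i - S.count i)) ∘ Multiset.cons a) S
      = - (((-1 : ℚ) ^ Multiset.card S) • f (fun i => (fun j => β j - eps a j) i - S.count i)) := by
    intro S
    have harg : (fun i => β i - ((a ::ₘ S).count i : ℤ))
        = (fun i => (fun j => β j - eps a j) i - (S.count i : ℤ)) := by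
      funext i
      simp only [Multiset.count_cons, eps]
      by_cases h : i = a
      · subst h; simp; push_cast; ring
      · have h' : ¬ (a = i) := fun hh => h hh.symm
        simp [h, h']
    simp only [Function.comp, Multiset.card_cons, pow_succ, harg]
    rw [mul_neg_one, neg_smul]
  rw [Multiset.map_congr rfl (fun S _ => key S), msum_neg]
  ring

/-- `OpS` commutes with a single lowering difference. -/
lemma OpS_lower (M : Multiset ℕ) (f : (ℕ → ℤ) → Lambda) (a : ℕ) (β : ℕ → ℤ) :
    OpS M (fun β' => f β' - f (fun i => β' i - eps a i)) β
      = OpS M f β - OpS M f (fun i => β i - eps a i) := by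
  unfold OpS
  have key : ∀ S : Multiset ℕ,
      ((-1 : ℚ) ^ Multiset.card S) •
        (f (fun i => β i - S.count i) - f (fun j => (fun i => β i - S.count i) j - eps a j))
      = ((-1 : ℚ) ^ Multiset.card S) • f (fun i => β i - S.count i)
        - ((-1 : ℚ) ^ Multiset.card S) • f (fun i => (fun j => β j - eps a j) i - S.count i) := by
    intro S
    have harg : (fun j => (fun i => β i - (S.count i : ℤ)) j - eps a j)
        = (fun i => (fun j => β j - eps a j) i - (S.count i : ℤ)) := by
      funext j; simp only []; ring
    rw [harg, smul_sub]
  rw [Multiset.map_congr rfl (fun S _ => key S), msum_sub]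

end PartB
section PartC

variable {z : ℕ}

lemma swf_sub_eps_z (β : ℕ → ℤ) :
    (fun i => swf z β i - eps z i) = swf z (fun i => β i - eps (z+1) i) := by
  funext i
  simp only [swf, eps]
  split_ifs <;> first | ring1 | (exfalso; omega)

lemma swf_sub_eps_z1 (β : ℕ → ℤ) :
    (fun i => swf z β i - eps (z+1) i) = swf z (fun i => β i - eps z i) := by
  funext i
  simp only [swf, eps]
  split_ifs <;> first | ring1 | (exfalso; omega)

lemma swf_sub_eps_other (a : ℕ) (ha1 : a ≠ z) (ha2 : a ≠ z + 1) (β : ℕ → ℤ) :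
    (fun i => swf z β i - eps a i) = swf z (fun i => β i - eps a i) := by
  funext i
  simp only [swf, eps]
  split_ifs <;> first | ring1 | (exfalso; omega)

/-- Main induction: `OpS A f` preserves `z,z+1`-symmetry when `A` has equal counts. -/
lemma opS_sym (f : (ℕ → ℤ) → Lambda) (hf : ∀ β, f (swf z β) = f β) :
    ∀ (A : Multiset ℕ), A.count z = A.count (z+1) → ∀ β, OpS A f (swf z β) = OpS A f β := by
  intro A
  induction A using Multiset.strongInductionOn with
  | _ A ih =>
    intro hA β
    by_cases hz : z ∈ A
    · have hz1 : z + 1 ∈ A.erase z := by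
        rw [Multiset.mem_erase_of_ne (by omega)]
        rw [← Multiset.count_pos]
        have : 0 < A.count z := Multiset.count_pos.2 hz
        omega
      set B := (A.erase z).erase (z+1) with hB
      have hAeq : A = z ::ₘ (z+1) ::ₘ B := by
        rw [hB, Multiset.cons_erase hz1, Multiset.cons_erase hz]
      have hBlt : B < A := by
        calc B ≤ A.erase z := Multiset.erase_le _ _
        _ < A := Multiset.erase_lt.2 hz
      have hBcount : B.count z = B.count (z+1) := by
        have c1 : B.count z = A.count z - 1 := by
          rw [hB, Multiset.count_erase_of_ne (by omega), Multiset.count_erase_self]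
        have c2 : B.count (z+1) = A.count (z+1) - 1 := by
          rw [hB, Multiset.count_erase_self, Multiset.count_erase_of_ne (by omega)]
        have : 0 < A.count z := Multiset.count_pos.2 hz
        omega
      have hg := ih B hBlt hBcount
      have expand : ∀ β' : ℕ → ℤ, OpS (z ::ₘ (z+1) ::ₘ B) f β' =
          OpS B f β' - OpS B f (fun i => β' i - eps (z+1) i)
            - (OpS B f (fun i => β' i - eps z i)
               - OpS B f (fun i => β' i - eps z i - eps (z+1) i)) := by
        intro β'
        rw [OpS_cons, OpS_cons, OpS_cons]
      have A1 := swf_sub_eps_z1 (z := z) β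
      have A2 := swf_sub_eps_z (z := z) β
      have A3 : (fun i => swf z β i - eps z i - eps (z+1) i)
          = swf z (fun i => β i - eps z i - eps (z+1) i) := by
        funext i
        simp only [swf, eps]
        split_ifs <;> first | ring1 | (exfalso; omega)
      rw [hAeq, expand, expand, A1, A2, A3, hg, hg, hg, hg]
      ring
    · have hz1 : z + 1 ∉ A := by
        rw [← Multiset.count_pos] at hz ⊢
        omega
      rcases Multiset.empty_or_exists_mem A with rfl | ⟨a, ha⟩
      · rw [OpS_zero, OpS_zero]; exact hf β
      · have haz : a ≠ z := fun h => hz (h ▸ ha)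
        have haz1 : a ≠ z + 1 := fun h => hz1 (h ▸ ha)
        have hAeq : A = a ::ₘ A.erase a := (Multiset.cons_erase ha).symm
        have hlt : A.erase a < A := Multiset.erase_lt.2 ha
        have hcnt : (A.erase a).count z = (A.erase a).count (z+1) := by
          rw [Multiset.count_erase_of_ne (by omega), Multiset.count_erase_of_ne (by omega)]
          exact hA
        have hg := ih _ hlt hcnt
        rw [hAeq, OpS_cons, OpS_cons, swf_sub_eps_other a haz haz1, hg β, hg _]

end PartC
section PartD

variable {z : ℕ}

lemma kprodL_sym (ℓ : ℕ) (hz : 1 ≤ z) (hzl : z + 1 ≤ ℓ) (β : ℕ → ℤ) :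
    kprod ℓ (swf z β) - kprod ℓ (fun i => swf z β i - eps (z+1) i)
      = kprod ℓ β - kprod ℓ (fun i => β i - eps (z+1) i) := by
  have hmem1 : z + 1 ∈ Finset.Icc 1 ℓ := by rw [Finset.mem_Icc]; omega
  have hmem2 : z ∈ (Finset.Icc 1 ℓ).erase (z+1) := by
    rw [Finset.mem_erase, Finset.mem_Icc]; constructor; omega; omega
  have hsplit : ∀ β' : ℕ → ℤ,
      kprod ℓ β' = kk (β' (z+1)) z *
        (kk (β' z) (z-1) * ∏ i ∈ ((Finset.Icc 1 ℓ).erase (z+1)).erase z, kk (β' i) (i-1)) := by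
    intro β'
    unfold kprod
    rw [← Finset.mul_prod_erase _ _ hmem1, ← Finset.mul_prod_erase _ _ hmem2]
    norm_num
  have hP : ∀ (g h : ℕ → ℤ), (∀ i, i ≠ z → i ≠ z+1 → g i = h i) →
      ∏ i ∈ ((Finset.Icc 1 ℓ).erase (z+1)).erase z, kk (g i) (i-1)
      = ∏ i ∈ ((Finset.Icc 1 ℓ).erase (z+1)).erase z, kk (h i) (i-1) := by
    intro g h hgh
    apply Finset.prod_congr rfl
    intro i hi
    rw [Finset.mem_erase] at hi
    obtain ⟨hiz, hi'⟩ := hi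
    rw [Finset.mem_erase] at hi'
    rw [hgh i hiz hi'.1]
  rw [hsplit, hsplit, hsplit, hsplit]
  rw [hP (swf z β) β (by intro i h1 h2; simp [swf, h1, h2])]
  rw [hP (fun i => swf z β i - eps (z+1) i) β
    (by intro i h1 h2; simp [swf, eps, h1, h2])]
  rw [hP (fun i => β i - eps (z+1) i) β (by intro i h1 h2; simp [eps, h2])]
  have nz : ¬ (z = z + 1) := by omega
  have nz2 : ¬ (z + 1 = z) := by omega
  have e1 : swf z β z = β (z+1) := by simp [swf]
  have e2 : swf z β (z+1) = β z := by simp [swf, nz2]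
  have e3 : eps (z+1) (z+1) = (1:ℤ) := by simp [eps]
  have e4 : eps (z+1) z = (0:ℤ) := by simp [eps, nz]
  simp only [e1, e2, e3, e4, sub_zero]
  have key : ∀ x : ℤ, kk x z - kk (x-1) z = kk x (z-1) := by
    intro x
    have h' : z - 1 + 1 = z := by omega
    have h2 := kk_succ x (z-1)
    rw [h'] at h2
    linear_combination h2
  set P := ∏ i ∈ ((Finset.Icc 1 ℓ).erase (z+1)).erase z, kk (β i) (i-1) with hPdef
  linear_combination (kk (β (z+1)) (z-1) * P) * key (β z)
    - (kk (β z) (z-1) * P) * key (β (z+1))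

lemma Phi_sym (ℓ : ℕ) (hz : 1 ≤ z) (hzl : z + 1 ≤ ℓ) (M : Multiset ℕ)
    (hcount : M.count z + 1 = M.count (z+1)) (β : ℕ → ℤ) :
    OpS M (kprod ℓ) (swf z β) = OpS M (kprod ℓ) β := by
  have hz1M : z + 1 ∈ M := by rw [← Multiset.count_pos]; omega
  have hMeq : M = (z+1) ::ₘ M.erase (z+1) := (Multiset.cons_erase hz1M).symm
  have hcnt : (M.erase (z+1)).count z = (M.erase (z+1)).count (z+1) := by
    rw [Multiset.count_erase_of_ne (by omega), Multiset.count_erase_self]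
    omega
  have key : ∀ β' : ℕ → ℤ, OpS M (kprod ℓ) β'
      = OpS (M.erase (z+1)) (fun b => kprod ℓ b - kprod ℓ (fun i => b i - eps (z+1) i)) β' := by
    intro β'
    conv_lhs => rw [hMeq]
    rw [OpS_cons, ← OpS_lower]
  rw [key, key]
  exact opS_sym (fun b => kprod ℓ b - kprod ℓ (fun i => b i - eps (z+1) i))
    (fun β' => kprodL_sym ℓ hz hzl β') (M.erase (z+1)) hcnt β

end PartD
section PartE

/-- swap `z ↔ z+1` on indices. -/
def swx (z x : ℕ) : ℕ := if x = z then z + 1 else if x = z + 1 then z else x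

/-- the root involution: fixes `(z,z+1)`, swaps `z ↔ z+1` in coordinates otherwise. -/
def tmap (z : ℕ) (p : ℕ × ℕ) : ℕ × ℕ :=
  if p = (z, z+1) ∨ p = (z+1, z) then p else (swx z p.1, swx z p.2)

/-- the involution on subsets: apply `tmap` and toggle `(z,z+1)`. -/
def tset (z : ℕ) (T : Finset (ℕ × ℕ)) : Finset (ℕ × ℕ) :=
  if (z, z+1) ∈ T then (T.image (tmap z)).erase (z, z+1)
  else insert (z, z+1) (T.image (tmap z))

lemma swx_invol (z x : ℕ) : swx z (swx z x) = x := by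
  unfold swx; split_ifs <;> omega

lemma swx_eq_iff (z a b : ℕ) : swx z a = b ↔ a = swx z b := by
  constructor
  · rintro rfl; rw [swx_invol]
  · rintro rfl; rw [swx_invol]

lemma swx_z (z : ℕ) : swx z z = z + 1 := by simp [swx]

lemma swx_z1 (z : ℕ) : swx z (z+1) = z := by unfold swx; split_ifs <;> omega

lemma swx_other {z x : ℕ} (h1 : x ≠ z) (h2 : x ≠ z + 1) : swx z x = x := by
  unfold swx; split_ifs <;> omega

lemma mem_Delta_iff (ℓ : ℕ) (p : ℕ × ℕ) :
    p ∈ Delta ℓ ↔ 1 ≤ p.1 ∧ p.1 < p.2 ∧ p.2 ≤ ℓ := by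
  cases' p with a b
  simp only [Delta, Finset.mem_filter, Finset.mem_product, Finset.mem_Icc]
  constructor
  · rintro ⟨⟨⟨h1, h2⟩, h3, h4⟩, h5⟩; exact ⟨h1, h5, h4⟩
  · rintro ⟨h1, h2, h3⟩; exact ⟨⟨⟨h1, by omega⟩, by omega, h3⟩, h2⟩

lemma mem_rowSet (Ψ : Finset (ℕ × ℕ)) (r j : ℕ) : j ∈ rowSet Ψ r ↔ (r, j) ∈ Ψ := by
  unfold rowSet
  simp only [Finset.mem_image, Finset.mem_filter]
  constructor
  · rintro ⟨p, ⟨hp, h1⟩, h2⟩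
    have : p = (r, j) := by
      cases p; simp_all
    rwa [← this]
  · intro h; exact ⟨(r, j), ⟨h, rfl⟩, rfl⟩

lemma mem_colSet (Ψ : Finset (ℕ × ℕ)) (c i : ℕ) : i ∈ colSet Ψ c ↔ (i, c) ∈ Ψ := by
  unfold colSet
  simp only [Finset.mem_image, Finset.mem_filter]
  constructor
  · rintro ⟨p, ⟨hp, h1⟩, h2⟩
    have : p = (i, c) := by
      cases p; simp_all
    rwa [← this]
  · intro h; exact ⟨(i, c), ⟨h, rfl⟩, rfl⟩

section Structural

variable {ℓ z : ℕ} {Ψ : Finset (ℕ × ℕ)}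
variable (hΨ : IsRootIdeal ℓ Ψ) (hz : 1 ≤ z) (hzl : z + 1 ≤ ℓ)
variable (hceil : HasCeiling Ψ z) (hwall : HasWall Ψ z)

include hΨ hz hzl hwall in
lemma row_mem_iff : ∀ j, (z, j) ∈ Ψ ↔ (z+1, j) ∈ Ψ := by
  have hsub : rowSet Ψ (z+1) ⊆ rowSet Ψ z := by
    intro j hj
    rw [mem_rowSet] at hj ⊢
    have hd : ((z+1:ℕ), j) ∈ Delta ℓ := hΨ.1 hj
    rw [mem_Delta_iff] at hd
    refine hΨ.2 _ hj (z, j) ?_ (by omega) (le_refl _)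
    rw [mem_Delta_iff]
    exact ⟨hz, by omega, by omega⟩
  have heq : rowSet Ψ (z+1) = rowSet Ψ z :=
    Finset.eq_of_subset_of_card_le hsub (le_of_eq hwall)
  intro j
  rw [← mem_rowSet, ← mem_rowSet, heq]

include hΨ hz hzl hceil in
lemma col_mem_iff : ∀ i, (i, z) ∈ Ψ ↔ (i, z+1) ∈ Ψ := by
  have hsub : colSet Ψ z ⊆ colSet Ψ (z+1) := by
    intro i hi
    rw [mem_colSet] at hi ⊢
    have hd : (i, z) ∈ Delta ℓ := hΨ.1 hi
    rw [mem_Delta_iff] at hd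
    refine hΨ.2 _ hi (i, z+1) ?_ (le_refl _) (by omega)
    rw [mem_Delta_iff]
    exact ⟨hd.1, by omega, by omega⟩
  have heq : colSet Ψ z = colSet Ψ (z+1) :=
    Finset.eq_of_subset_of_card_le hsub (le_of_eq hceil.symm)
  intro i
  rw [← mem_colSet, ← mem_colSet, heq]

include hΨ hz hzl hwall in
lemma alpha_mem : (z, z+1) ∈ Delta ℓ \ Ψ := by
  rw [Finset.mem_sdiff, mem_Delta_iff]
  refine ⟨⟨hz, by omega, hzl⟩, fun h => ?_⟩
  have h2 : ((z+1:ℕ), z+1) ∈ Ψ := (row_mem_iff hΨ hz hzl hwall (z+1)).1 h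
  have := hΨ.1 h2
  rw [mem_Delta_iff] at this
  omega

include hΨ hz hzl hceil hwall in
lemma tmap_mem : ∀ p ∈ Delta ℓ \ Ψ, tmap z p ∈ Delta ℓ \ Ψ := by
  intro p hp
  by_cases hpa : p = (z, z+1)
  · rw [tmap, if_pos (Or.inl hpa)]; exact hp
  · have hpb : ¬ (p = (z, z+1) ∨ p = (z+1, z)) := by
      rintro (h | h)
      · exact hpa h
      · rw [Finset.mem_sdiff] at hp
        have h2 := hp.1
        rw [h, mem_Delta_iff] at h2
        obtain ⟨-, h3, -⟩ := h2
        omega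
    rw [tmap, if_neg hpb]
    rw [Finset.mem_sdiff, mem_Delta_iff] at hp
    obtain ⟨⟨h1, h2, h3⟩, h4⟩ := hp
    cases' p with a b
    simp only at h1 h2 h3 ⊢
    have hab : ¬ (a = z ∧ b = z + 1) := by
      intro ⟨ha, hb⟩; exact hpa (by simp [ha, hb])
    rw [Finset.mem_sdiff, mem_Delta_iff]
    by_cases haz : a = z
    · have hbz1 : b ≠ z + 1 := fun h => hab ⟨haz, h⟩
      have hb : z + 2 ≤ b := by omega
      rw [haz] at h4 ⊢
      rw [swx_z, swx_other (by omega) (by omega)]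
      refine ⟨⟨by omega, by omega, h3⟩, fun hmem => ?_⟩
      exact h4 ((row_mem_iff hΨ hz hzl hwall b).2 hmem)
    · by_cases haz1 : a = z + 1
      · rw [haz1] at h4 h2 ⊢
        rw [swx_z1, swx_other (by omega) (by omega)]
        refine ⟨⟨hz, by omega, h3⟩, fun hmem => ?_⟩
        exact h4 ((row_mem_iff hΨ hz hzl hwall b).1 hmem)
      · rw [swx_other haz haz1]
        by_cases hbz : b = z
        · rw [hbz] at h4 ⊢
          rw [swx_z]
          refine ⟨⟨h1, by omega, by omega⟩, fun hmem => ?_⟩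
          exact h4 ((col_mem_iff hΨ hz hzl hceil a).2 hmem)
        · by_cases hbz1 : b = z + 1
          · rw [hbz1] at h4 ⊢
            rw [swx_z1]
            refine ⟨⟨h1, by omega, by omega⟩, fun hmem => ?_⟩
            exact h4 ((col_mem_iff hΨ hz hzl hceil a).1 hmem)
          · rw [swx_other hbz hbz1]
            exact ⟨⟨h1, h2, h3⟩, h4⟩

end Structural

lemma tmap_invol (z : ℕ) (p : ℕ × ℕ) : tmap z (tmap z p) = p := by
  by_cases h : p = (z, z+1) ∨ p = (z+1, z)
  · have h0 : tmap z p = p := by rw [tmap, if_pos h]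
    rw [h0, h0]
  · have h0 : tmap z p = (swx z p.1, swx z p.2) := by rw [tmap, if_neg h]
    rw [h0]
    have hne : ¬ ((swx z p.1, swx z p.2) = (z, z+1) ∨ (swx z p.1, swx z p.2) = (z+1, z)) := by
      rintro (hh | hh) <;> rw [Prod.mk.injEq] at hh
      · apply h; right
        have h1 := (swx_eq_iff z p.1 z).1 hh.1
        have h2 := (swx_eq_iff z p.2 (z+1)).1 hh.2
        rw [swx_z] at h1; rw [swx_z1] at h2
        rw [Prod.ext_iff]; exact ⟨h1, h2⟩
      · apply h; left
        have h1 := (swx_eq_iff z p.1 (z+1)).1 hh.1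
        have h2 := (swx_eq_iff z p.2 z).1 hh.2
        rw [swx_z1] at h1; rw [swx_z] at h2
        rw [Prod.ext_iff]; exact ⟨h1, h2⟩
    rw [tmap, if_neg hne]
    simp only [swx_invol]

lemma tmap_inj (z : ℕ) : Function.Injective (tmap z) := by
  intro a b h
  have := congrArg (tmap z) h
  rwa [tmap_invol, tmap_invol] at this

lemma tmap_alpha (z : ℕ) : tmap z (z, z+1) = (z, z+1) := by
  rw [tmap, if_pos (Or.inl rfl)]

lemma alpha_mem_image {z : ℕ} {T : Finset (ℕ × ℕ)} :
    (z, z+1) ∈ T.image (tmap z) ↔ (z, z+1) ∈ T := by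
  rw [Finset.mem_image]
  constructor
  · rintro ⟨p, hp, hm⟩
    have : p = (z, z+1) := tmap_inj z (by rw [hm, tmap_alpha])
    rwa [← this]
  · intro h
    exact ⟨(z, z+1), h, tmap_alpha z⟩

lemma image_tmap_image (z : ℕ) (T : Finset (ℕ × ℕ)) :
    (T.image (tmap z)).image (tmap z) = T := by
  rw [Finset.image_image]
  have : T.image (tmap z ∘ tmap z) = T.image id := by
    apply Finset.image_congr
    intro p _
    exact tmap_invol z p
  rw [this, Finset.image_id]

lemma tset_invol (z : ℕ) (T : Finset (ℕ × ℕ)) : tset z (tset z T) = T := by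
  by_cases hα : (z, z+1) ∈ T
  · have h1 : tset z T = (T.image (tmap z)).erase (z, z+1) := by rw [tset, if_pos hα]
    have h2 : (z, z+1) ∉ tset z T := by rw [h1]; exact Finset.notMem_erase _ _
    rw [tset, if_neg h2, h1]
    rw [Finset.image_erase (tmap_inj z), image_tmap_image, tmap_alpha]
    exact Finset.insert_erase hα
  · have h1 : tset z T = insert (z, z+1) (T.image (tmap z)) := by rw [tset, if_neg hα]
    have h2 : (z, z+1) ∈ tset z T := by rw [h1]; exact Finset.mem_insert_self _ _
    rw [tset, if_pos h2, h1]
    rw [Finset.image_insert, image_tmap_image, tmap_alpha]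
    exact Finset.erase_insert hα
    
lemma tset_sign (z : ℕ) (T : Finset (ℕ × ℕ)) :
    ((-1 : ℚ)) ^ (tset z T).card = -((-1) ^ T.card) := by
  by_cases hα : (z, z+1) ∈ T
  · rw [tset, if_pos hα]
    have hmem : (z, z+1) ∈ T.image (tmap z) := alpha_mem_image.2 hα
    rw [Finset.card_erase_of_mem hmem, Finset.card_image_of_injective _ (tmap_inj z)]
    have hc : 1 ≤ T.card := Finset.card_pos.2 ⟨_, hα⟩
    obtain ⟨n, hn⟩ : ∃ n, T.card = n + 1 := ⟨T.card - 1, by omega⟩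
    rw [hn, Nat.add_sub_cancel, pow_succ]
    ring
  · rw [tset, if_neg hα]
    have hmem : (z, z+1) ∉ T.image (tmap z) := fun h => hα (alpha_mem_image.1 h)
    rw [Finset.card_insert_of_notMem hmem, Finset.card_image_of_injective _ (tmap_inj z),
      pow_succ]
    ring

section Structural2

variable {ℓ z : ℕ} {Ψ : Finset (ℕ × ℕ)}
variable (hΨ : IsRootIdeal ℓ Ψ) (hz : 1 ≤ z) (hzl : z + 1 ≤ ℓ)
variable (hceil : HasCeiling Ψ z) (hwall : HasWall Ψ z)

include hΨ hz hzl hceil hwall in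
lemma tset_subset {T : Finset (ℕ × ℕ)} (hT : T ⊆ Delta ℓ \ Ψ) :
    tset z T ⊆ Delta ℓ \ Ψ := by
  have himg : T.image (tmap z) ⊆ Delta ℓ \ Ψ :=
    Finset.image_subset_iff.2 (fun p hp => tmap_mem hΨ hz hzl hceil hwall p (hT hp))
  rw [tset]
  split_ifs with h
  · exact (Finset.erase_subset _ _).trans himg
  · exact Finset.insert_subset (alpha_mem hΨ hz hzl hwall) himg

end Structural2

end PartE
section PartF

lemma epsR_sum (T : Finset (ℕ × ℕ)) (i : ℕ) :
    epsR T i = ∑ p ∈ T, ((if p.1 = i then (1:ℤ) else 0) - (if p.2 = i then 1 else 0)) := by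
  unfold epsR
  rw [Finset.sum_sub_distrib]
  congr 1
  · rw [Finset.card_filter]
    push_cast
    apply Finset.sum_congr rfl
    intro p _
    split_ifs <;> simp
  · rw [Finset.card_filter]
    push_cast
    apply Finset.sum_congr rfl
    intro p _
    split_ifs <;> simp

lemma chi_tmap {ℓ z : ℕ} {p : ℕ × ℕ} (hp : p ∈ Delta ℓ) (i : ℕ) :
    ((if (tmap z p).1 = i then (1:ℤ) else 0) - (if (tmap z p).2 = i then 1 else 0))
    = ((if p.1 = swx z i then (1:ℤ) else 0) - (if p.2 = swx z i then 1 else 0))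
      + (if p = (z, z+1) then
            (((if z = i then (1:ℤ) else 0) - (if z+1 = i then 1 else 0))
            - ((if z = swx z i then (1:ℤ) else 0) - (if z+1 = swx z i then 1 else 0)))
         else 0) := by
  by_cases hpa : p = (z, z+1)
  · rw [if_pos hpa, hpa, tmap_alpha]
    have s1 : ((z:ℕ), z+1).1 = z := rfl
    have s2 : ((z:ℕ), z+1).2 = z+1 := rfl
    rw [s1, s2]
    ring
  · have hpb : ¬ (p = (z, z+1) ∨ p = (z+1, z)) := by
      rintro (h | h)
      · exact hpa h
      · rw [h, mem_Delta_iff] at hp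
        obtain ⟨-, h3, -⟩ := hp
        omega
    rw [if_neg hpa, tmap, if_neg hpb, add_zero]
    have e1 : (swx z p.1 = i) ↔ (p.1 = swx z i) := swx_eq_iff z p.1 i
    have e2 : (swx z p.2 = i) ↔ (p.2 = swx z i) := swx_eq_iff z p.2 i
    simp only [e1, e2]

lemma chi_alpha_eq (z i : ℕ) :
    ((if (z:ℕ) = i then (1:ℤ) else 0) - (if z+1 = i then 1 else 0))
      = (if i = z then (1:ℤ) else if i = z + 1 then -1 else 0) := by
  split_ifs <;> first | ring1 | (exfalso; omega)

lemma chi_alpha_sw (z i : ℕ) :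
    -(((if (z:ℕ) = swx z i then (1:ℤ) else 0) - (if z+1 = swx z i then 1 else 0)))
      = (if i = z then (1:ℤ) else if i = z + 1 then -1 else 0) := by
  by_cases h1 : i = z
  · rw [h1, swx_z]
    split_ifs <;> first | ring1 | (exfalso; omega)
  · by_cases h2 : i = z + 1
    · rw [h2, swx_z1]
      split_ifs <;> first | ring1 | (exfalso; omega)
    · rw [swx_other h1 h2]
      split_ifs <;> first | ring1 | (exfalso; omega)

lemma epsR_tset {ℓ z : ℕ} {T : Finset (ℕ × ℕ)} (hT : T ⊆ Delta ℓ) (i : ℕ) :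
    epsR (tset z T) i = epsR T (swx z i)
      + (if i = z then 1 else if i = z + 1 then -1 else 0) := by
  rw [epsR_sum, epsR_sum]
  have hsum_img : ∑ p ∈ T.image (tmap z),
        ((if p.1 = i then (1:ℤ) else 0) - (if p.2 = i then 1 else 0))
      = (∑ p ∈ T, ((if p.1 = swx z i then (1:ℤ) else 0) - (if p.2 = swx z i then 1 else 0)))
        + (if ((z:ℕ), z+1) ∈ T then
            (((if (z:ℕ) = i then (1:ℤ) else 0) - (if z+1 = i then 1 else 0))
            - ((if (z:ℕ) = swx z i then (1:ℤ) else 0) - (if z+1 = swx z i then 1 else 0)))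
           else 0) := by
    rw [Finset.sum_image (fun x _ y _ h => tmap_inj z h)]
    rw [Finset.sum_congr rfl (fun p hp => chi_tmap (hT hp) i)]
    rw [Finset.sum_add_distrib]
    congr 1
    exact Finset.sum_ite_eq' T ((z:ℕ), z+1) _
  by_cases hα : ((z:ℕ), z+1) ∈ T
  · rw [if_pos hα] at hsum_img
    rw [tset, if_pos hα]
    have hkey := Finset.sum_erase_add (T.image (tmap z))
      (fun p => ((if p.1 = i then (1:ℤ) else 0) - (if p.2 = i then 1 else 0)))
      (alpha_mem_image.2 hα)
    simp only at hkey
    have hsw := chi_alpha_sw z i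
    linear_combination hkey + hsum_img + hsw
  · rw [if_neg hα] at hsum_img
    rw [tset, if_neg hα]
    have hnot : ((z:ℕ), z+1) ∉ T.image (tmap z) := fun h => hα (alpha_mem_image.1 h)
    rw [Finset.sum_insert hnot]
    simp only
    have heq := chi_alpha_eq z i
    linear_combination hsum_img + heq

end PartF
section PartG

lemma msum_smul {α : Type*} (r : ℚ) (m : Multiset α) (g : α → Lambda) :
    (m.map fun x => r • g x).sum = r • (m.map g).sum := by
  induction m using Multiset.induction with
  | empty => simp
  | cons a s ih => simp [ih, smul_add]

lemma katalan_eq (ℓ : ℕ) (Ψ : Finset (ℕ × ℕ)) (M : Multiset ℕ) (γ : ℕ → ℤ) :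
    Katalan ℓ Ψ M γ = ∑ T ∈ (Delta ℓ \ Ψ).powerset,
      ((-1 : ℚ) ^ T.card) • OpS M (kprod ℓ) (fun i => γ i + epsR T i) := by
  unfold Katalan
  have step1 : ∀ S : Multiset ℕ,
      ((-1:ℚ) ^ Multiset.card S) •
        ∑ T ∈ (Delta ℓ \ Ψ).powerset, ((-1:ℚ) ^ T.card) •
          kprod ℓ (fun i => γ i - S.count i + epsR T i)
      = ∑ T ∈ (Delta ℓ \ Ψ).powerset, ((-1:ℚ) ^ T.card) •
          (((-1:ℚ) ^ Multiset.card S) •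
            kprod ℓ (fun i => (fun j => γ j + epsR T j) i - S.count i)) := by
    intro S
    rw [Finset.smul_sum]
    apply Finset.sum_congr rfl
    intro T _
    rw [smul_comm]
    have harg : (fun i => γ i - (S.count i : ℤ) + epsR T i)
        = (fun i => (fun j => γ j + epsR T j) i - (S.count i : ℤ)) := by
      funext i; simp only []; ring
    rw [harg]
  rw [Multiset.map_congr rfl (fun S _ => step1 S), msum_finsum]
  apply Finset.sum_congr rfl
  intro T _
  rw [msum_smul]
  rfl

end PartG
/-- If `Ψ` has a ceiling in columns `z, z+1`, a wall in rows `z, z+1`, and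
`m_M(z) + 1 = m_M(z+1)`, then `K(Ψ; M; γ) + K(Ψ; M; s_zγ - ε_z + ε_{z+1}) = 0`. -/
theorem katalan_cancel (ℓ : ℕ) (Ψ : Finset (ℕ × ℕ)) (hΨ : IsRootIdeal ℓ Ψ)
    (M : Multiset ℕ) (hM : SuppIn ℓ M) (γ : ℕ → ℤ) (z : ℕ)
    (hz1 : 1 ≤ z) (hz2 : z ≤ ℓ)
    (hceil : HasCeiling Ψ z) (hwall : HasWall Ψ z)
    (hcount : M.count z + 1 = M.count (z + 1)) :
    Katalan ℓ Ψ M γ +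
      Katalan ℓ Ψ M
        (fun i => if i = z then γ (z + 1) - 1
          else if i = z + 1 then γ z + 1 else γ i) = 0 := by
  have hz1M : z + 1 ∈ M := by
    rw [← Multiset.count_pos]
    omega
  have hzl : z + 1 ≤ ℓ := (hM _ hz1M).2
  rw [katalan_eq, katalan_eq]
  set γ' : ℕ → ℤ := fun i => if i = z then γ (z + 1) - 1
      else if i = z + 1 then γ z + 1 else γ i with hγ'
  have hreindex :
      ∑ T ∈ (Delta ℓ \ Ψ).powerset,
          ((-1 : ℚ) ^ T.card) • OpS M (kprod ℓ) (fun i => γ' i + epsR T i)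
        = ∑ T ∈ (Delta ℓ \ Ψ).powerset,
          ((-1 : ℚ) ^ (tset z T).card) • OpS M (kprod ℓ) (fun i => γ' i + epsR (tset z T) i) := by
    apply Finset.sum_nbij' (i := fun T => tset z T) (j := fun T => tset z T)
    · intro T hT
      rw [Finset.mem_powerset] at hT ⊢
      exact tset_subset hΨ hz1 hzl hceil hwall hT
    · intro T hT
      rw [Finset.mem_powerset] at hT ⊢
      exact tset_subset hΨ hz1 hzl hceil hwall hT
    · intro T _; exact tset_invol z T
    · intro T _; exact tset_invol z T
    · intro T hT
      rw [tset_invol z T]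
  rw [hreindex, ← Finset.sum_add_distrib]
  apply Finset.sum_eq_zero
  intro T hT
  rw [Finset.mem_powerset] at hT
  have hTD : T ⊆ Delta ℓ := hT.trans Finset.sdiff_subset
  have harg : (fun i => γ' i + epsR (tset z T) i)
      = swf z (fun i => γ i + epsR T i) := by
    funext i
    rw [epsR_tset hTD i]
    by_cases h1 : i = z
    · subst h1
      simp only [swf, hγ', swx_z]
      split_ifs <;> first | ring1 | (exfalso; omega)
    · by_cases h2 : i = z + 1
      · subst h2
        simp only [swf, hγ', swx_z1]
        split_ifs <;> first | ring1 | (exfalso; omega)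
      · simp only [swf, hγ', swx_other h1 h2]
        split_ifs <;> first | ring1 | (exfalso; omega)
  rw [harg, Phi_sym ℓ hz1 hzl M hcount, tset_sign, neg_smul]
  ring

end
end

section
/- Let Ψ ⊆ Δ_ℓ^+ be a root ideal, M a multiset supported in [ℓ], γ ∈ ℤ^ℓ, and d ≥ 0. Then e_d^⊥ K(Ψ; M; γ) = ∑_{S ⊆ [ℓ], |S| = d} K(Ψ; M; γ − ε_S), where ε_S := ∑_{i∈S} ε_i and e_d^⊥ is the operator adjoint to multiplication by the elementary symmetric function e_d with respect to the Hall inner product. In particular, e_d^⊥ K(Ψ; M; γ) = 0 for d > ℓ. -/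
open scoped BigOperators

noncomputable section

attribute [local instance] Classical.propDecidable

lemma Eop_hh (m : ℤ) :
    Eop (hh m) = Polynomial.C (hh m) + Polynomial.X * Polynomial.C (hh (m - 1)) := by
  rcases lt_trichotomy m 0 with h | h | h
  · rw [show hh m = 0 from if_pos h, show hh (m - 1) = 0 from if_pos (by omega)]
    simp
  · subst h
    rw [show hh 0 = 1 from rfl, show hh (0 - 1 : ℤ) = 0 from rfl]
    simp
  · have hm : hh m = MvPolynomial.X (m.toNat - 1) := by
      unfold hh; rw [if_neg (by omega), if_neg (by omega)]
    rw [hm, Eop, MvPolynomial.aeval_X, show ((m.toNat - 1 : ℕ) : ℤ) = m - 1 by omega]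

lemma kk_pred (m : ℤ) (r : ℕ) :
    kk (m - 1) r = ∑ i ∈ Finset.range (m.toNat + 1),
      (zchoose ((r : ℤ) + i - 1) i : ℚ) • hh (m - 1 - i) := by
  rcases le_or_gt m 0 with h | h
  · rw [kk, show (m - 1).toNat = m.toNat by omega]
  · conv_rhs => rw [show m.toNat = (m - 1).toNat + 1 by omega, Finset.sum_range_succ]
    rw [kk, show hh (m - 1 - (((m - 1).toNat + 1 : ℕ) : ℤ)) = 0 from if_pos (by omega),
      smul_zero, add_zero]

lemma Eop_kk (m : ℤ) (r : ℕ) :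
    Eop (kk m r) = Polynomial.C (kk m r) + Polynomial.X * Polynomial.C (kk (m - 1) r) := by
  rw [kk, kk_pred, map_sum, map_sum, map_sum, Finset.mul_sum, ← Finset.sum_add_distrib]
  refine Finset.sum_congr rfl fun i _ => ?_
  rw [map_smul, Eop_hh, smul_add]
  congr 1
  · rw [Polynomial.smul_C]
  · rw [show m - (i : ℤ) - 1 = m - 1 - i by ring, ← Polynomial.smul_C, mul_smul_comm]

lemma coeff_Eop_kprod (ℓ d : ℕ) (γ : ℕ → ℤ) :
    (Eop (kprod ℓ γ)).coeff d =
      ∑ S ∈ (Finset.Icc 1 ℓ).powersetCard d,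
        kprod ℓ (fun i => γ i - if i ∈ S then 1 else 0) := by
  have step1 : Eop (kprod ℓ γ) = ∏ i ∈ Finset.Icc 1 ℓ,
      (Polynomial.X * Polynomial.C (kk (γ i - 1) (i - 1)) + Polynomial.C (kk (γ i) (i - 1))) := by
    rw [kprod, map_prod]
    exact Finset.prod_congr rfl fun i _ => by rw [Eop_kk, add_comm]
  rw [step1, Finset.prod_add]
  have step2 : ∀ t ∈ (Finset.Icc 1 ℓ).powerset,
      ((∏ i ∈ t, Polynomial.X * Polynomial.C (kk (γ i - 1) (i - 1))) *
        ∏ i ∈ Finset.Icc 1 ℓ \ t, Polynomial.C (kk (γ i) (i - 1))) =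
      Polynomial.monomial t.card (kprod ℓ (fun i => γ i - if i ∈ t then 1 else 0)) := by
    intro t ht
    rw [Finset.mem_powerset] at ht
    rw [Finset.prod_mul_distrib, Finset.prod_const, ← map_prod, ← map_prod]
    rw [mul_assoc, ← map_mul, mul_comm, Polynomial.C_mul_X_pow_eq_monomial]
    congr 1
    rw [kprod, ← Finset.prod_sdiff ht, mul_comm]
    congr 1
    · exact Finset.prod_congr rfl fun i hi => by
        rw [if_neg (Finset.mem_sdiff.mp hi).2, sub_zero]
    · exact Finset.prod_congr rfl fun i hi => by rw [if_pos hi]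
  rw [Finset.sum_congr rfl step2]
  rw [Polynomial.finset_sum_coeff]
  rw [Finset.powersetCard_eq_filter, Finset.sum_filter]
  refine Finset.sum_congr rfl fun t _ => ?_
  rw [Polynomial.coeff_monomial]

/-- `e_d^⊥` as a `ℚ`-linear map. -/
def eperpL (d : ℕ) : Lambda →ₗ[ℚ] Lambda :=
  ((Polynomial.lcoeff Lambda d).restrictScalars ℚ).comp Eop.toLinearMap

lemma eperp_eq_eperpL (d : ℕ) (f : Lambda) : eperp d f = eperpL d f := rfl

lemma multiset_sum_swap {α β : Type} (m : Multiset α) (A : Finset β) (g : β → α → Lambda) :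
    (m.map fun x => ∑ s ∈ A, g s x).sum = ∑ s ∈ A, (m.map (g s)).sum := by
  induction m using Multiset.induction with
  | empty => simp
  | cons a m ih => simp [ih, Finset.sum_add_distrib]

lemma eperp_katalan_eq (ℓ : ℕ) (Ψ : Finset (ℕ × ℕ)) (M : Multiset ℕ) (γ : ℕ → ℤ) (d : ℕ) :
    eperp d (Katalan ℓ Ψ M γ) =
      ∑ S ∈ (Finset.Icc 1 ℓ).powersetCard d,
        Katalan ℓ Ψ M (fun i => γ i - if i ∈ S then 1 else 0) := by
  rw [eperp_eq_eperpL, Katalan, map_multiset_sum, Multiset.map_map]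
  unfold Katalan
  rw [← multiset_sum_swap]
  congr 1
  apply Multiset.map_congr rfl
  intro S _
  simp only [Function.comp_apply, map_smul, map_sum]
  rw [← Finset.smul_sum]
  congr 1
  rw [Finset.sum_comm]
  refine Finset.sum_congr rfl fun T _ => ?_
  rw [← Finset.smul_sum]
  congr 1
  have : ∀ f : Lambda, eperpL d f = (Eop f).coeff d := fun _ => rfl
  rw [this, coeff_Eop_kprod]
  refine Finset.sum_congr rfl fun S' _ => ?_
  congr 1
  funext i
  ring

/-- `e_d^⊥ K(Ψ; M; γ) = ∑_{S ⊆ [ℓ], |S| = d} K(Ψ; M; γ - ε_S)`; in particular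
it vanishes for `d > ℓ`. -/
theorem eperp_katalan (ℓ : ℕ) (Ψ : Finset (ℕ × ℕ)) (hΨ : IsRootIdeal ℓ Ψ)
    (M : Multiset ℕ) (hM : SuppIn ℓ M) (γ : ℕ → ℤ) (d : ℕ) :
    (eperp d (Katalan ℓ Ψ M γ) =
      ∑ S ∈ (Finset.Icc 1 ℓ).powersetCard d,
        Katalan ℓ Ψ M (fun i => γ i - if i ∈ S then 1 else 0)) ∧
    (ℓ < d → eperp d (Katalan ℓ Ψ M γ) = 0) := by
  refine ⟨eperp_katalan_eq ℓ Ψ M γ d, fun h => ?_⟩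
  rw [eperp_katalan_eq ℓ Ψ M γ d,
    Finset.powersetCard_eq_empty.mpr (by simpa using h), Finset.sum_empty]

end
end

section
/- Let λ be a k-bounded partition of length ℓ, let bot be the bottom row of the root ideal Δ^k(λ) (the largest r such that row r of Δ^k(λ) is nonempty), and let z ∈ [bot+1, ℓ]. Set μ := λ − ε_z. Then L_z g̃_λ^{(k)} = g̃_μ^{(k)}, where g̃_ν^{(k)} := K(Δ^k(ν); Δ^k(ν); ν) is the (generalized) closed k-Schur Katalan function. -/
open scoped BigOperators

noncomputable section

attribute [local instance] Classical.propDecidable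

/-- For `λ ∈ P_ℓ^k` and `z ∈ [bot+1, ℓ]` (rows beyond the bottom of `Δ^k(λ)`),
`L_z g̃_λ^{(k)} = g̃_{λ-ε_z}^{(k)}`. -/
theorem Lg_beyond_bottom (ℓ k : ℕ) (lam : ℕ → ℤ) (hlam : IsPartition ℓ k lam)
    (b : ℕ) (hb : IsBottom (Dk ℓ k lam) b) (z : ℕ)
    (hz1 : b + 1 ≤ z) (hz2 : z ≤ ℓ) :
    Lg ℓ k lam z = cKS ℓ k (fun i => lam i - eps z i) := by
  have hDk : Dk ℓ k lam = Dk ℓ k (fun i => lam i - eps z i) := by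
    ext p
    simp only [Dk, Finset.mem_filter]
    constructor
    · rintro ⟨hd, hc⟩
      refine ⟨hd, ?_⟩
      have hne : p.1 ≠ z := by
        intro h
        have := hb.1 p (by simp [Dk, Finset.mem_filter]; exact ⟨hd, hc⟩)
        omega
      simp [eps, hne]
      exact hc
    · rintro ⟨hd, hc⟩
      refine ⟨hd, ?_⟩
      by_cases hne : p.1 = z
      · exfalso
        have hc' : (k : ℤ) - lam p.1 + (p.1 : ℤ) < (p.2 : ℤ) := by
          simp [eps, hne] at hc; rw [hne]; omega
        have := hb.1 p (by simp [Dk, Finset.mem_filter]; exact ⟨hd, hc'⟩)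
        omega
      · simp [eps, hne] at hc
        exact hc
  unfold Lg cKS
  rw [hDk]

end
end
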